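/- For all x, y ∈ ℝ, lim_{t→∞} t^{3/2}·Q_ξ(t,y|x) = ξ²·√(2/π)·K_0(e^{−x/ξ})·K_0(e^{−y/ξ}). -/

import Mathlib

open MeasureTheory Filter Topology

/-- Macdonald function of order zero: `K₀(z) = ∫_0^∞ e^{-z cosh u} du`. -/
noncomputable def K0 (z : ℝ) : ℝ := ∫ u in Set.Ioi (0:ℝ), Real.exp (-(z * Real.cosh u))

/-- Macdonald function of imaginary order: `K_{ik}(z) = ∫_0^∞ e^{-z cosh u} cos(ku) du`. -/
noncomputable def Kik (k z : ℝ) : ℝ :=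
  ∫ u in Set.Ioi (0:ℝ), Real.exp (-(z * Real.cosh u)) * Real.cos (k * u)

/-- Transition probability density `Q_ξ(t,y|x)` of the ξ-killing Brownian motion. -/
noncomputable def Qxi (ξ t y x : ℝ) : ℝ :=
  (1 / Real.pi ^ 2) *
    ∫ k : ℝ, Real.exp (-(k ^ 2 * t) / 2) * Kik (ξ * k) (Real.exp (-(x / ξ)))
      * Kik (ξ * k) (Real.exp (-(y / ξ))) * (ξ * k * Real.sinh (Real.pi * ξ * k))

/-- Survival probability `N_ξ(T,x) = ∫_ℝ Q_ξ(T,y|x) dy`. -/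
noncomputable def Nxi (ξ T x : ℝ) : ℝ := ∫ y : ℝ, Qxi ξ T y x

section AuxLemmas
open Set

lemma expcosh_integrableOn {z : ℝ} (hz : 0 < z) :
    IntegrableOn (fun u : ℝ => Real.exp (-(z * Real.cosh u))) (Ioi 0) := by
  apply Integrable.mono' (exp_neg_integrableOn_Ioi 0 hz)
  · exact (Real.continuous_exp.comp (by continuity)).aestronglyMeasurable
  · refine (ae_restrict_iff' measurableSet_Ioi).2 (Filter.Eventually.of_forall fun u hu => ?_)
    rw [Real.norm_eq_abs, Real.abs_exp, neg_mul]
    apply Real.exp_le_exp.2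
    have h1 : u ≤ Real.cosh u :=
      le_of_lt (lt_trans (Real.self_lt_sinh_iff.2 hu) (Real.sinh_lt_cosh u))
    nlinarith [hz.le]

lemma Kik_integrableOn {z : ℝ} (hz : 0 < z) (k : ℝ) :
    IntegrableOn (fun u : ℝ => Real.exp (-(z * Real.cosh u)) * Real.cos (k * u)) (Ioi 0) := by
  apply Integrable.mono' (expcosh_integrableOn hz)
  · exact ((Real.continuous_exp.comp (by continuity)).mul
      (Real.continuous_cos.comp (by continuity))).aestronglyMeasurable
  · refine Filter.Eventually.of_forall fun u => ?_
    rw [Real.norm_eq_abs, abs_mul, Real.abs_exp]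
    calc Real.exp (-(z * Real.cosh u)) * |Real.cos (k * u)|
        ≤ Real.exp (-(z * Real.cosh u)) * 1 :=
          mul_le_mul_of_nonneg_left (Real.abs_cos_le_one _) (Real.exp_nonneg _)
      _ = _ := mul_one _

lemma K0_nonneg (z : ℝ) : 0 ≤ K0 z :=
  setIntegral_nonneg measurableSet_Ioi fun u _ => Real.exp_nonneg _

lemma abs_Kik_le {z : ℝ} (hz : 0 < z) (k : ℝ) : |Kik k z| ≤ K0 z := by
  rw [Kik, K0]
  refine le_trans (?_ : _ ≤ ∫ u in Ioi 0, Real.exp (-(z * Real.cosh u)) * |Real.cos (k * u)|) ?_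
  · simpa [Real.norm_eq_abs] using
      norm_integral_le_integral_norm (μ := volume.restrict (Ioi 0))
        (fun u => Real.exp (-(z * Real.cosh u)) * Real.cos (k * u))
  refine integral_mono_of_nonneg (Filter.Eventually.of_forall fun u => by positivity)
    (expcosh_integrableOn hz) (Filter.Eventually.of_forall fun u => ?_)
  show Real.exp (-(z * Real.cosh u)) * |Real.cos (k * u)| ≤ Real.exp (-(z * Real.cosh u))
  calc Real.exp (-(z * Real.cosh u)) * |Real.cos (k * u)|
      ≤ Real.exp (-(z * Real.cosh u)) * 1 :=
        mul_le_mul_of_nonneg_left (Real.abs_cos_le_one _) (Real.exp_nonneg _)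
    _ = _ := mul_one _

lemma Kik_zero (z : ℝ) : Kik 0 z = K0 z := by simp [Kik, K0]

lemma continuous_Kik {z : ℝ} (hz : 0 < z) : Continuous fun k => Kik k z := by
  refine continuous_of_dominated
    (F := fun k u => Real.exp (-(z * Real.cosh u)) * Real.cos (k * u))
    (bound := fun u => Real.exp (-(z * Real.cosh u)))
    (fun k => ((Real.continuous_exp.comp (by continuity)).mul
      (Real.continuous_cos.comp (by continuity))).aestronglyMeasurable)
    (fun k => Filter.Eventually.of_forall fun u => ?_)
    (expcosh_integrableOn hz)
    (Filter.Eventually.of_forall fun u => by continuity)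
  rw [Real.norm_eq_abs, abs_mul, Real.abs_exp]
  calc Real.exp (-(z * Real.cosh u)) * |Real.cos (k * u)|
      ≤ Real.exp (-(z * Real.cosh u)) * 1 :=
        mul_le_mul_of_nonneg_left (Real.abs_cos_le_one _) (Real.exp_nonneg _)
    _ = _ := mul_one _

lemma sinh_le_mul_cosh {x : ℝ} (hx : 0 ≤ x) : Real.sinh x ≤ x * Real.cosh x := by
  have hder : ∀ y : ℝ, HasDerivAt (fun z => z * Real.cosh z - Real.sinh z)
      (y * Real.sinh y) y := by
    intro y
    have h := ((hasDerivAt_id y).mul (Real.hasDerivAt_cosh y)).sub (Real.hasDerivAt_sinh y)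
    exact h.congr_deriv (by simp only [id]; ring)
  have hmono : MonotoneOn (fun z => z * Real.cosh z - Real.sinh z) (Ici 0) := by
    apply monotoneOn_of_deriv_nonneg (convex_Ici 0)
    · exact ((continuous_id.mul Real.continuous_cosh).sub Real.continuous_sinh).continuousOn
    · intro y hy
      exact ((hder y).differentiableAt).differentiableWithinAt
    · intro y hy
      rw [interior_Ici] at hy
      rw [(hder y).deriv]
      exact mul_nonneg (le_of_lt hy) (Real.sinh_nonneg_iff.2 (le_of_lt hy))
  have h0 := hmono (self_mem_Ici) hx hx
  simp only [Real.cosh_zero, Real.sinh_zero, zero_mul, sub_zero, zero_sub, neg_zero] at h0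
  linarith [h0]

lemma abs_sinh_le_abs_mul_cosh (x : ℝ) : |Real.sinh x| ≤ |x| * Real.cosh x := by
  rw [Real.abs_sinh, ← Real.cosh_abs]
  exact sinh_le_mul_cosh (abs_nonneg x)

lemma cosh_le_exp_abs (x : ℝ) : Real.cosh x ≤ Real.exp |x| := by
  rw [Real.cosh_eq]
  have h1 := Real.exp_le_exp.2 (le_abs_self x)
  have h2 := Real.exp_le_exp.2 (neg_le_abs x)
  linarith

lemma tendsto_mul_sinh (d : ℝ) :
    Tendsto (fun r : ℝ => r * Real.sinh (d / r)) atTop (𝓝 d) := by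
  rcases eq_or_ne d 0 with rfl | hd
  · simpa using tendsto_const_nhds.congr (fun r : ℝ => by simp : ∀ r : ℝ, 0 = r * Real.sinh (0 / r))
  · have hslope : Tendsto (fun z : ℝ => Real.sinh z / z) (𝓝[≠] 0) (𝓝 1) := by
      have h := hasDerivAt_iff_tendsto_slope.1 (Real.hasDerivAt_sinh 0)
      rw [Real.cosh_zero] at h
      refine h.congr fun z => ?_
      simp [slope_def_field, div_eq_mul_inv]
    have hto : Tendsto (fun r : ℝ => d / r) atTop (𝓝[≠] (0:ℝ)) := by
      refine tendsto_nhdsWithin_of_tendsto_nhds_of_eventually_within _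
        (Tendsto.div_atTop tendsto_const_nhds tendsto_id) ?_
      filter_upwards [eventually_gt_atTop (0:ℝ)] with r hr
      exact div_ne_zero hd (ne_of_gt hr)
    have h2 : Tendsto (fun r : ℝ => d * (Real.sinh (d / r) / (d / r))) atTop (𝓝 d) := by
      have := (hslope.comp hto).const_mul d
      simpa using this
    refine h2.congr' ?_
    filter_upwards [eventually_gt_atTop (0:ℝ)] with r hr
    field_simp

lemma gauss_shape : (fun s : ℝ => Real.exp (-(1/2:ℝ) * s^2)) = fun s : ℝ => Real.exp (-(s^2)/2) := by
  funext s; congr 1; ring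

lemma integrable_gauss_half : Integrable (fun s : ℝ => Real.exp (-(s^2)/2)) := by
  have h := integrable_exp_neg_mul_sq (b := (1/2:ℝ)) (by norm_num)
  rwa [gauss_shape] at h

lemma integrable_sq_gauss {c : ℝ} (hc : 0 < c) :
    Integrable (fun s : ℝ => s^2 * Real.exp (-c * s^2)) := by
  have h := integrable_rpow_mul_exp_neg_mul_sq hc (s := 2) (by norm_num)
  refine h.congr ?_
  filter_upwards with s
  rw [show (2:ℝ) = ((2:ℕ):ℝ) by norm_num, Real.rpow_natCast]

lemma integrable_sq_gauss_half : Integrable (fun s : ℝ => s^2 * Real.exp (-(s^2)/2)) := by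
  refine (integrable_sq_gauss (c := (1/2:ℝ)) (by norm_num)).congr ?_
  filter_upwards with s
  rw [show -(1/2:ℝ)*s^2 = -(s^2)/2 by ring]

lemma gauss_half_integral : ∫ s : ℝ, Real.exp (-(s^2)/2) = Real.sqrt (2*Real.pi) := by
  have h := integral_gaussian (1/2 : ℝ)
  rw [gauss_shape] at h
  rw [h]
  rw [div_div_eq_mul_div, div_one, mul_comm]

lemma moment_integral : ∫ s : ℝ, s^2 * Real.exp (-(s^2)/2) = Real.sqrt (2*Real.pi) := by
  set f : ℝ → ℝ := fun s => -(s * Real.exp (-(s^2)/2)) with hf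
  have hderiv : ∀ s : ℝ, HasDerivAt f (s^2 * Real.exp (-(s^2)/2) - Real.exp (-(s^2)/2)) s := by
    intro s
    have h3 : HasDerivAt (fun s : ℝ => -(s^2)/2) (-s) s := by
      have := ((hasDerivAt_pow 2 s).neg.div_const 2)
      simpa using this.congr_deriv (by ring)
    have h4 : HasDerivAt (fun s : ℝ => Real.exp (-(s^2)/2)) (Real.exp (-(s^2)/2) * (-s)) s :=
      h3.exp
    have h5 := ((hasDerivAt_id s).mul h4).neg
    refine h5.congr_deriv ?_
    simp only [id]; ring
  have hint : Integrable (fun s : ℝ => s^2 * Real.exp (-(s^2)/2) - Real.exp (-(s^2)/2)) :=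
    integrable_sq_gauss_half.sub integrable_gauss_half
  have htop : Tendsto f atTop (𝓝 0) := by
    rw [tendsto_zero_iff_norm_tendsto_zero]
    apply squeeze_zero' (g := fun s : ℝ => s * Real.exp (-s))
      (Filter.Eventually.of_forall fun s => norm_nonneg _)
    · filter_upwards [eventually_ge_atTop (2:ℝ)] with s hs
      have hs0 : (0:ℝ) ≤ s := by linarith
      rw [hf]
      simp only [norm_neg, Real.norm_eq_abs, abs_mul, Real.abs_exp, abs_of_nonneg hs0]
      have : Real.exp (-(s^2)/2) ≤ Real.exp (-s) := by
        apply Real.exp_le_exp.2; nlinarith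
      exact mul_le_mul_of_nonneg_left this hs0
    · have := Real.tendsto_pow_mul_exp_neg_atTop_nhds_zero 1
      simpa using this
  have hbot : Tendsto f atBot (𝓝 0) := by
    have hneg : Tendsto (fun s : ℝ => f (-s)) atTop (𝓝 0) := by
      have h0 : (fun s : ℝ => f (-s)) = fun s => -(f s) := by
        funext s; rw [hf]; simp only; rw [neg_sq]; ring
      rw [h0]
      simpa using htop.neg
    have := hneg.comp tendsto_neg_atBot_atTop
    refine this.congr fun s => ?_
    simp [Function.comp]
  have key := integral_of_hasDerivAt_of_tendsto hderiv hint hbot htop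
  rw [integral_sub integrable_sq_gauss_half integrable_gauss_half] at key
  rw [gauss_half_integral] at key
  linarith [key]

lemma aux_tendsto {ξ a b : ℝ} (hξ : 0 < ξ) (ha : 0 < a) (hb : 0 < b) :
    Tendsto (fun r : ℝ => ∫ s : ℝ,
        Real.exp (-(s^2)/2) * Kik (ξ*s/r) a * Kik (ξ*s/r) b *
          (ξ * s * (r * Real.sinh (Real.pi*ξ*s/r)))) atTop
      (𝓝 (Real.pi * ξ^2 * K0 a * K0 b * Real.sqrt (2*Real.pi))) := by
  have hπ := Real.pi_pos
  have hlim : ∫ s : ℝ, (Real.pi * ξ^2 * K0 a * K0 b) * (s^2 * Real.exp (-(s^2)/2))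
      = Real.pi * ξ^2 * K0 a * K0 b * Real.sqrt (2*Real.pi) := by
    rw [integral_const_mul, moment_integral]
  rw [← hlim]
  set bound : ℝ → ℝ := fun s =>
    (K0 a * K0 b * (Real.pi * ξ^2) * Real.exp ((Real.pi*ξ)^2)) *
      (s^2 * Real.exp (-(1/4:ℝ) * s^2)) with hbd
  apply tendsto_integral_filter_of_dominated_convergence bound
  · -- measurability
    filter_upwards [eventually_gt_atTop (0:ℝ)] with r hr
    have hc1 : Continuous fun s : ℝ => Kik (ξ*s/r) a :=
      (continuous_Kik ha).comp (by continuity)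
    have hc2 : Continuous fun s : ℝ => Kik (ξ*s/r) b :=
      (continuous_Kik hb).comp (by continuity)
    have hE : Continuous fun s : ℝ => Real.exp (-(s^2)/2) := by continuity
    have hS : Continuous fun s : ℝ => ξ * s * (r * Real.sinh (Real.pi*ξ*s/r)) := by continuity
    exact (((hE.mul hc1).mul hc2).mul hS).aestronglyMeasurable
  · -- bound
    filter_upwards [eventually_ge_atTop (1:ℝ)] with r hr
    refine Filter.Eventually.of_forall fun s => ?_
    have hr0 : (0:ℝ) < r := lt_of_lt_of_le one_pos hr
    have habs : |Real.pi*ξ*s/r| = Real.pi*ξ*|s|/r := by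
      rw [abs_div, abs_mul, abs_mul, abs_of_pos Real.pi_pos, abs_of_pos hξ, abs_of_pos hr0]
    have hT : r * |Real.sinh (Real.pi*ξ*s/r)| ≤ Real.pi*ξ*|s| * Real.cosh (Real.pi*ξ*s) := by
      have h1 : |Real.sinh (Real.pi*ξ*s/r)| ≤ (Real.pi*ξ*|s|/r) * Real.cosh (Real.pi*ξ*s) := by
        refine le_trans (abs_sinh_le_abs_mul_cosh _) ?_
        rw [habs]
        refine mul_le_mul_of_nonneg_left ?_ (by positivity)
        rw [Real.cosh_le_cosh, habs, abs_mul, abs_mul, abs_of_pos Real.pi_pos, abs_of_pos hξ]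
        exact div_le_self (by positivity) hr
      calc r * |Real.sinh (Real.pi*ξ*s/r)|
          ≤ r * ((Real.pi*ξ*|s|/r) * Real.cosh (Real.pi*ξ*s)) :=
            mul_le_mul_of_nonneg_left h1 hr0.le
        _ = Real.pi*ξ*|s| * Real.cosh (Real.pi*ξ*s) := by field_simp
    have hcosh : Real.cosh (Real.pi*ξ*s) * Real.exp (-(s^2)/2)
        ≤ Real.exp ((Real.pi*ξ)^2) * Real.exp (-(1/4:ℝ)*s^2) := by
      calc Real.cosh (Real.pi*ξ*s) * Real.exp (-(s^2)/2)
          ≤ Real.exp |Real.pi*ξ*s| * Real.exp (-(s^2)/2) :=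
            mul_le_mul_of_nonneg_right (cosh_le_exp_abs _) (Real.exp_nonneg _)
        _ = Real.exp (|Real.pi*ξ*s| + -(s^2)/2) := (Real.exp_add _ _).symm
        _ ≤ Real.exp ((Real.pi*ξ)^2 + -(1/4:ℝ)*s^2) := by
            apply Real.exp_le_exp.2
            rw [abs_mul, abs_mul, abs_of_pos Real.pi_pos, abs_of_pos hξ]
            nlinarith [sq_nonneg (Real.pi*ξ - |s|/2), sq_abs s, abs_nonneg s,
              mul_pos Real.pi_pos hξ]
        _ = _ := Real.exp_add _ _
    have hnorm : ‖Real.exp (-(s^2)/2) * Kik (ξ*s/r) a * Kik (ξ*s/r) b *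
        (ξ * s * (r * Real.sinh (Real.pi*ξ*s/r)))‖
        = Real.exp (-(s^2)/2) * |Kik (ξ*s/r) a| * |Kik (ξ*s/r) b| *
          (ξ * |s| * (r * |Real.sinh (Real.pi*ξ*s/r)|)) := by
      simp only [Real.norm_eq_abs, abs_mul, Real.abs_exp, abs_of_pos hξ, abs_of_pos hr0]
    rw [hnorm]
    have hKa := abs_Kik_le ha (ξ*s/r)
    have hKb := abs_Kik_le hb (ξ*s/r)
    have hEnn : (0:ℝ) ≤ Real.exp (-(s^2)/2) := Real.exp_nonneg _
    have hA : Real.exp (-(s^2)/2) * |Kik (ξ*s/r) a| * |Kik (ξ*s/r) b|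
        ≤ Real.exp (-(s^2)/2) * K0 a * K0 b :=
      mul_le_mul (mul_le_mul_of_nonneg_left hKa hEnn) hKb (abs_nonneg _)
        (mul_nonneg hEnn (K0_nonneg a))
    have hB : ξ * |s| * (r * |Real.sinh (Real.pi*ξ*s/r)|)
        ≤ ξ * |s| * (Real.pi*ξ*|s| * Real.cosh (Real.pi*ξ*s)) :=
      mul_le_mul_of_nonneg_left hT (by positivity)
    calc Real.exp (-(s^2)/2) * |Kik (ξ*s/r) a| * |Kik (ξ*s/r) b| *
          (ξ * |s| * (r * |Real.sinh (Real.pi*ξ*s/r)|))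
        ≤ Real.exp (-(s^2)/2) * K0 a * K0 b *
          (ξ * |s| * (Real.pi*ξ*|s| * Real.cosh (Real.pi*ξ*s))) :=
          mul_le_mul hA hB (by positivity)
            (mul_nonneg (mul_nonneg hEnn (K0_nonneg a)) (K0_nonneg b))
      _ = (K0 a * K0 b * (Real.pi * ξ^2)) *
          ((|s| * |s|) * (Real.cosh (Real.pi*ξ*s) * Real.exp (-(s^2)/2))) := by ring
      _ ≤ (K0 a * K0 b * (Real.pi * ξ^2)) *
          ((|s| * |s|) * (Real.exp ((Real.pi*ξ)^2) * Real.exp (-(1/4:ℝ)*s^2))) := by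
          refine mul_le_mul_of_nonneg_left
            (mul_le_mul_of_nonneg_left hcosh (by positivity)) ?_
          exact mul_nonneg (mul_nonneg (K0_nonneg a) (K0_nonneg b)) (by positivity)
      _ = bound s := by rw [hbd, abs_mul_abs_self]; ring
  · -- integrability of bound
    exact (integrable_sq_gauss (c := (1/4:ℝ)) (by norm_num)).const_mul _
  · -- pointwise limit
    refine Filter.Eventually.of_forall fun s => ?_
    have hdiv : Tendsto (fun r : ℝ => ξ*s/r) atTop (𝓝 0) :=
      Tendsto.div_atTop tendsto_const_nhds tendsto_id
    have hKa : Tendsto (fun r : ℝ => Kik (ξ*s/r) a) atTop (𝓝 (K0 a)) := by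
      have h := ((continuous_Kik ha).tendsto 0).comp hdiv
      rwa [Kik_zero] at h
    have hKb : Tendsto (fun r : ℝ => Kik (ξ*s/r) b) atTop (𝓝 (K0 b)) := by
      have h := ((continuous_Kik hb).tendsto 0).comp hdiv
      rwa [Kik_zero] at h
    have hsinh : Tendsto (fun r : ℝ => r * Real.sinh (Real.pi*ξ*s/r)) atTop
        (𝓝 (Real.pi*ξ*s)) := tendsto_mul_sinh (Real.pi*ξ*s)
    have hh := (((hKa.const_mul (Real.exp (-(s^2)/2))).mul hKb).mul
      (hsinh.const_mul (ξ*s)))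
    have heq : Real.exp (-(s^2)/2) * K0 a * K0 b * (ξ*s*(Real.pi*ξ*s))
        = (Real.pi * ξ^2 * K0 a * K0 b) * (s^2 * Real.exp (-(s^2)/2)) := by ring
    rw [heq] at hh
    exact hh

end AuxLemmas

/-- Long-time asymptotics of the transition density:
`lim_{t→∞} t^{3/2} Q_ξ(t,y|x) = ξ² √(2/π) K₀(e^{-x/ξ}) K₀(e^{-y/ξ})`. -/
theorem Qxi_long_time_asymptotics (ξ : ℝ) (hξ : 0 < ξ) (x y : ℝ) :
    Tendsto (fun t : ℝ => t ^ ((3 : ℝ) / 2) * Qxi ξ t y x) atTop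
      (𝓝 (ξ ^ 2 * Real.sqrt (2 / Real.pi)
        * K0 (Real.exp (-(x / ξ))) * K0 (Real.exp (-(y / ξ))))) := by
  have hπ := Real.pi_pos
  have ha : 0 < Real.exp (-(x / ξ)) := Real.exp_pos _
  have hb : 0 < Real.exp (-(y / ξ)) := Real.exp_pos _
  have hsqrt : Tendsto Real.sqrt atTop atTop := by
    have h : Real.sqrt = fun x : ℝ => x ^ ((1:ℝ)/2) := funext Real.sqrt_eq_rpow
    rw [h]
    exact tendsto_rpow_atTop (by norm_num)
  have hcomp := (aux_tendsto hξ ha hb).comp hsqrt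
  have hmul := hcomp.const_mul (1/Real.pi^2)
  have hconst : (1/Real.pi^2) * (Real.pi * ξ^2 * K0 (Real.exp (-(x / ξ)))
        * K0 (Real.exp (-(y / ξ))) * Real.sqrt (2*Real.pi))
      = ξ ^ 2 * Real.sqrt (2 / Real.pi) * K0 (Real.exp (-(x / ξ))) * K0 (Real.exp (-(y / ξ))) := by
    have hs : Real.sqrt (2*Real.pi) = Real.sqrt (2/Real.pi) * Real.pi := by
      have h2 : (2:ℝ)*Real.pi = (2/Real.pi) * Real.pi^2 := by field_simp
      rw [h2, Real.sqrt_mul (by positivity), Real.sqrt_sq hπ.le]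
    rw [hs]
    field_simp
  rw [hconst] at hmul
  refine hmul.congr' ?_
  filter_upwards [eventually_ge_atTop (1:ℝ)] with t ht
  have ht0 : (0:ℝ) < t := lt_of_lt_of_le one_pos ht
  have hrt : (0:ℝ) < Real.sqrt t := Real.sqrt_pos.2 ht0
  have hrt2 : (Real.sqrt t)^2 = t := Real.sq_sqrt ht0.le
  simp only [Function.comp, Qxi]
  have hpow : t ^ ((3:ℝ)/2) = t * Real.sqrt t := by
    rw [show (3:ℝ)/2 = 1 + 1/2 by norm_num, Real.rpow_add ht0, Real.rpow_one,
      ← Real.sqrt_eq_rpow]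
  have h1 : ∫ s : ℝ,
      Real.exp (-(s^2)/2) * Kik (ξ*s/Real.sqrt t) (Real.exp (-(x / ξ)))
        * Kik (ξ*s/Real.sqrt t) (Real.exp (-(y / ξ)))
        * (ξ * s * (Real.sqrt t * Real.sinh (Real.pi*ξ*s/Real.sqrt t)))
      = ∫ s : ℝ, t * (Real.exp (-(((Real.sqrt t)⁻¹ * s) ^ 2 * t) / 2)
        * Kik (ξ * ((Real.sqrt t)⁻¹ * s)) (Real.exp (-(x / ξ)))
        * Kik (ξ * ((Real.sqrt t)⁻¹ * s)) (Real.exp (-(y / ξ)))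
        * (ξ * ((Real.sqrt t)⁻¹ * s) * Real.sinh (Real.pi * ξ * ((Real.sqrt t)⁻¹ * s)))) := by
    congr 1
    funext s
    have e1 : ((Real.sqrt t)⁻¹ * s) ^ 2 * t = s^2 := by
      rw [mul_pow, inv_pow, hrt2]
      field_simp
    have e2 : ξ * ((Real.sqrt t)⁻¹ * s) = ξ*s/Real.sqrt t := by ring
    have e3 : Real.pi * ξ * ((Real.sqrt t)⁻¹ * s) = Real.pi*ξ*s/Real.sqrt t := by ring
    rw [e1, e2, e3]
    set r := Real.sqrt t with hrdef
    rw [← hrt2]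
    field_simp
  have h3 := Measure.integral_comp_mul_left (fun k : ℝ =>
      Real.exp (-(k ^ 2 * t) / 2) * Kik (ξ * k) (Real.exp (-(x / ξ)))
        * Kik (ξ * k) (Real.exp (-(y / ξ)))
        * (ξ * k * Real.sinh (Real.pi * ξ * k))) ((Real.sqrt t)⁻¹)
  simp only [inv_inv, smul_eq_mul, abs_of_pos hrt] at h3
  rw [h1, integral_const_mul, h3, hpow]
  ring
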